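/- For all x ≠ y in ℝ³, one has the smooth Fefferman–de la Llave representation of the Coulomb potential: 1/(4π|x−y|) = ∫_0^∞ ∫_{ℝ³} G_r(x−z) G_r(y−z) dz dr, where G_r(x) := (2πr)^{-3/2} exp(−|x|²/(2r)). -/

import Mathlib

open MeasureTheory Real
open scoped ENNReal

noncomputable section

abbrev E3 : Type := EuclideanSpace ℝ (Fin 3)

/-- The repulsive Coulomb potential `V(z) = 1/(4π|z|)` on `ℝ³`. -/
def V (z : E3) : ℝ := (4 * π * ‖z‖)⁻¹

/-- The heat kernel `G_r(x) = (2πr)^{-3/2} exp(−|x|²/(2r))` on `ℝ³`. -/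
def G (r : ℝ) (x : E3) : ℝ := (2 * π * r) ^ (-(3 : ℝ) / 2) * Real.exp (-‖x‖ ^ 2 / (2 * r))

lemma inner_int' {r : ℝ} (hr : 0 < r) (x y : E3) :
    ∫ z : E3, G r (x - z) * G r (y - z)
      = (4 * π * r) ^ (-(3:ℝ)/2) * Real.exp (-‖x - y‖ ^ 2 / (4 * r)) := by
  set d : E3 := (2:ℝ)⁻¹ • (x - y) with hd
  set m : E3 := (2:ℝ)⁻¹ • (x + y) with hm
  have h2r : (0:ℝ) < 2 * π * r := by positivity
  have hrne : r ≠ 0 := hr.ne'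
  have step1 : ∫ z : E3, G r (x - z) * G r (y - z)
      = ∫ z : E3, G r (x - (z + m)) * G r (y - (z + m)) :=
    (integral_add_right_eq_self (fun z : E3 => G r (x - z) * G r (y - z)) m).symm
  have hx' : ∀ z : E3, x - (z + m) = d - z := by intro z; rw [hd, hm]; module
  have hy' : ∀ z : E3, y - (z + m) = -(d + z) := by intro z; rw [hd, hm]; module
  have key : ∀ z : E3, G r (x - (z + m)) * G r (y - (z + m))
      = ((2 * π * r) ^ (-(3:ℝ)/2) * (2 * π * r) ^ (-(3:ℝ)/2) * Real.exp (-‖d‖^2 / r))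
        * Real.exp (-(r⁻¹) * ‖z‖^2) := by
    intro z
    rw [hx' z, hy' z]
    simp only [G, norm_neg]
    have hpar : ‖d - z‖^2 + ‖d + z‖^2 = 2*‖d‖^2 + 2*‖z‖^2 := by
      rw [norm_sub_sq_real, norm_add_sq_real]; ring
    have hE : -‖d - z‖ ^ 2 / (2 * r) + -‖d + z‖ ^ 2 / (2 * r)
        = -‖d‖^2 / r + -(r⁻¹) * ‖z‖^2 := by
      field_simp
      linear_combination (-1) * hpar
    calc ((2 * π * r) ^ (-(3:ℝ)/2) * Real.exp (-‖d - z‖ ^ 2 / (2 * r))) *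
        ((2 * π * r) ^ (-(3:ℝ)/2) * Real.exp (-‖d + z‖ ^ 2 / (2 * r)))
        = (2 * π * r) ^ (-(3:ℝ)/2) * (2 * π * r) ^ (-(3:ℝ)/2) *
          Real.exp (-‖d - z‖ ^ 2 / (2 * r) + -‖d + z‖ ^ 2 / (2 * r)) := by
          rw [Real.exp_add]; ring
      _ = (2 * π * r) ^ (-(3:ℝ)/2) * (2 * π * r) ^ (-(3:ℝ)/2) *
          Real.exp (-‖d‖^2 / r + -(r⁻¹) * ‖z‖^2) := by rw [hE]
      _ = ((2 * π * r) ^ (-(3:ℝ)/2) * (2 * π * r) ^ (-(3:ℝ)/2) * Real.exp (-‖d‖^2 / r))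
          * Real.exp (-(r⁻¹) * ‖z‖^2) := by rw [Real.exp_add]; ring
  rw [step1, integral_congr_ae (Filter.Eventually.of_forall key), integral_const_mul,
    GaussianFourier.integral_rexp_neg_mul_sq_norm (inv_pos.mpr hr)]
  have hfr : (Module.finrank ℝ E3 : ℝ) = 3 := by simp [finrank_euclideanSpace]
  have hdiv : (π / r⁻¹ : ℝ) = π * r := by field_simp
  rw [hfr, hdiv]
  have hdn : ‖d‖^2 = ‖x - y‖^2 / 4 := by
    rw [hd, norm_smul]
    simp [norm_inv]
    ring
  have hexp : -‖d‖^2 / r = -‖x - y‖^2 / (4*r) := by rw [hdn]; field_simp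
  have hconst : (2 * π * r) ^ (-(3:ℝ)/2) * (2 * π * r) ^ (-(3:ℝ)/2) * (π * r) ^ ((3:ℝ)/2)
      = (4 * π * r) ^ (-(3:ℝ)/2) := by
    have h1 : (0:ℝ) < π * r := by positivity
    have h4 : (0:ℝ) < 4 * π * r := by positivity
    have p2 := (Real.rpow_pos_of_pos h2r ((3:ℝ)/2)).ne'
    have p4 := (Real.rpow_pos_of_pos h4 ((3:ℝ)/2)).ne'
    rw [show (-(3:ℝ)/2) = -((3:ℝ)/2) by norm_num, Real.rpow_neg h2r.le, Real.rpow_neg h4.le]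
    field_simp
    rw [← Real.mul_rpow h1.le (by positivity : (0:ℝ) ≤ π * r * 4), sq, ← Real.mul_rpow h2r.le h2r.le]
    congr 1
    ring
  calc (2 * π * r) ^ (-(3:ℝ)/2) * (2 * π * r) ^ (-(3:ℝ)/2) * Real.exp (-‖d‖ ^ 2 / r) *
        (π * r) ^ ((3:ℝ)/2)
      = ((2 * π * r) ^ (-(3:ℝ)/2) * (2 * π * r) ^ (-(3:ℝ)/2) * (π * r) ^ ((3:ℝ)/2)) *
        Real.exp (-‖d‖ ^ 2 / r) := by ring
    _ = (4 * π * r) ^ (-(3:ℝ)/2) * Real.exp (-‖x - y‖ ^ 2 / (4 * r)) := by rw [hconst, hexp]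

lemma outer_int' {c : ℝ} (hc : 0 < c) :
    ∫ r in Set.Ioi (0:ℝ), r ^ (-(3:ℝ)/2) * Real.exp (-c / r)
      = Real.sqrt π * c ^ (-(1:ℝ)/2) := by
  have h1 : ∫ x in Set.Ioi (0:ℝ), (|(-1:ℝ)| * x ^ ((-1:ℝ)-1)) •
      (fun y : ℝ => y ^ (-(1:ℝ)/2) * Real.exp (-c * y)) (x ^ (-1:ℝ))
      = ∫ y in Set.Ioi (0:ℝ), y ^ (-(1:ℝ)/2) * Real.exp (-c * y) :=
    integral_comp_rpow_Ioi (fun y : ℝ => y ^ (-(1:ℝ)/2) * Real.exp (-c * y)) (p := -1)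
      (by norm_num)
  have h2 : ∀ x ∈ Set.Ioi (0:ℝ), (|(-1:ℝ)| * x ^ ((-1:ℝ)-1)) •
      (fun y : ℝ => y ^ (-(1:ℝ)/2) * Real.exp (-c * y)) (x ^ (-1:ℝ))
      = x ^ (-(3:ℝ)/2) * Real.exp (-c / x) := by
    intro x hx
    have hx : (0:ℝ) < x := hx
    simp only [smul_eq_mul, abs_neg, abs_one, one_mul]
    rw [← Real.rpow_mul hx.le, Real.rpow_neg_one, show ((-1:ℝ)) * (-(1:ℝ)/2) = (1:ℝ)/2 by norm_num,
      show (-1:ℝ) - 1 = -(2:ℝ) by norm_num,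
      show x ^ (-(2:ℝ)) * (x ^ ((1:ℝ)/2) * Real.exp (-c * x⁻¹))
        = (x ^ (-(2:ℝ)) * x ^ ((1:ℝ)/2)) * Real.exp (-c * x⁻¹) by ring,
      ← Real.rpow_add hx, show (-(2:ℝ)) + (1:ℝ)/2 = -(3:ℝ)/2 by norm_num]
    rw [neg_mul, ← div_eq_mul_inv, neg_div, neg_div]
  rw [setIntegral_congr_fun measurableSet_Ioi h2] at h1
  rw [h1]
  have h3 : ∀ y ∈ Set.Ioi (0:ℝ), y ^ (-(1:ℝ)/2) * Real.exp (-c * y)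
      = y ^ (-(1:ℝ)/2) * Real.exp (-c * y ^ (1:ℝ)) := by
    intro y _; rw [Real.rpow_one]
  rw [setIntegral_congr_fun measurableSet_Ioi h3,
    integral_rpow_mul_exp_neg_mul_rpow one_pos (by norm_num : (-1:ℝ) < -(1:ℝ)/2) hc]
  rw [show (-(-(1:ℝ)/2 + 1)/1) = -(1:ℝ)/2 by norm_num,
    show ((-(1:ℝ)/2 + 1)/1) = (1:ℝ)/2 by norm_num]
  rw [show ((1:ℝ)/2 : ℝ) = (2:ℝ)⁻¹ by norm_num] at *
  rw [show Real.Gamma (2⁻¹ : ℝ) = Real.sqrt π by rw [← Real.Gamma_one_half_eq]; norm_num]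
  ring

theorem statement6 (x y : E3) (hxy : x ≠ y) :
    V (x - y) = ∫ r in Set.Ioi (0 : ℝ), ∫ z : E3, G r (x - z) * G r (y - z) := by
  have ha : 0 < ‖x - y‖ := by
    rw [norm_pos_iff]
    exact sub_ne_zero.mpr hxy
  have hc : (0:ℝ) < ‖x - y‖^2/4 := by positivity
  have hstep : ∀ r ∈ Set.Ioi (0:ℝ), (∫ z : E3, G r (x - z) * G r (y - z))
      = (4*π) ^ (-(3:ℝ)/2) * (r ^ (-(3:ℝ)/2) * Real.exp (-(‖x - y‖^2/4) / r)) := by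
    intro r hr
    have hr : (0:ℝ) < r := hr
    rw [inner_int' hr x y, show (4*π*r : ℝ) = (4*π)*r by ring,
      Real.mul_rpow (by positivity) hr.le,
      show -‖x - y‖^2 / (4*r) = -(‖x - y‖^2/4)/r by field_simp]
    ring
  rw [setIntegral_congr_fun measurableSet_Ioi hstep, integral_const_mul, outer_int' hc]
  set a := ‖x - y‖ with hadef
  have h1 : ((a^2/4 : ℝ)) ^ (-(1:ℝ)/2) = 2 / a := by
    rw [show (a^2/4 : ℝ) = (a/2)^(2:ℕ) by ring, ← Real.rpow_natCast (a/2) 2,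
      ← Real.rpow_mul (by positivity), show ((2:ℕ):ℝ) * (-(1:ℝ)/2) = -1 by norm_num,
      Real.rpow_neg_one, inv_div]
  have h2 : (4*π : ℝ) ^ (-(3:ℝ)/2) = (8 * π * Real.sqrt π)⁻¹ := by
    rw [show (-(3:ℝ)/2) = -((3:ℝ)/2) by norm_num, Real.rpow_neg (by positivity)]
    congr 1
    rw [Real.mul_rpow (by norm_num) pi_pos.le,
      show (4:ℝ) = 2^(2:ℕ) by norm_num, ← Real.rpow_natCast 2 2,
      ← Real.rpow_mul (by norm_num), show ((2:ℕ):ℝ) * ((3:ℝ)/2) = (3:ℝ) by norm_num,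
      show ((3:ℝ)/2) = 1 + 1/2 by norm_num, Real.rpow_add pi_pos, Real.rpow_one,
      ← Real.sqrt_eq_rpow, show (3:ℝ) = ((3:ℕ):ℝ) by norm_num, Real.rpow_natCast]
    norm_num
    ring
  rw [h1, h2, V, ← hadef]
  have hπ : Real.sqrt π ≠ 0 := (Real.sqrt_pos.mpr pi_pos).ne'
  have haz : a ≠ 0 := ha.ne'
  field_simp
  ring
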